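/- Let λ̂ : [t1,∞) → ℝ satisfy |λ̂(t)| ≤ K t^{-1/2} for all t ≥ t1 ≥ 1 and λ̂'(t) = (3/t)(1 - e^{λ̂(t)/2}) + r(t) with |r(t)| ≤ C t^{-2}. Then there exists C' > 0 with |λ̂(t)| ≤ C' t^{-1} for all t ≥ t1. -/

import Mathlib

private lemma mono_aux {f f' : ℝ → ℝ} {a : ℝ} (hf : ∀ t ≥ a, HasDerivAt f (f' t) t)
    (h0 : ∀ t ≥ a, 0 ≤ f' t) : ∀ t ≥ a, f a ≤ f t := by
  have hmono : MonotoneOn f (Set.Ici a) := by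
    apply monotoneOn_of_hasDerivWithinAt_nonneg (convex_Ici a)
      (fun x hx => (hf x hx).continuousAt.continuousWithinAt) (f' := f')
    · intro x hx
      rw [interior_Ici] at hx
      exact ((hf x (le_of_lt hx)).hasDerivWithinAt)
    · intro x hx
      rw [interior_Ici] at hx
      exact h0 x (le_of_lt hx)
  exact fun t ht => hmono Set.self_mem_Ici ht ht

set_option maxHeartbeats 1000000 in
theorem stmt17 (lam r : ℝ → ℝ) (t1 K C : ℝ) (ht1 : 1 ≤ t1) (hK : 0 < K) (hC : 0 < C)
    (hbound : ∀ t ≥ t1, |lam t| ≤ K * t ^ ((-1:ℝ)/2))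
    (hr : ∀ t ≥ t1, |r t| ≤ C * t ^ ((-2:ℝ)))
    (hderiv : ∀ t ≥ t1, HasDerivAt lam ((3 / t) * (1 - Real.exp (lam t / 2)) + r t) t) :
    ∃ C' > 0, ∀ t ≥ t1, |lam t| ≤ C' * t⁻¹ := by
  set t2 : ℝ := max t1 (K^2) with ht2def
  have ht12 : t1 ≤ t2 := le_max_left _ _
  have ht2one : 1 ≤ t2 := le_trans ht1 ht12
  have ht2pos : (0:ℝ) < t2 := by linarith
  have hKt2 : K^2 ≤ t2 := le_max_right _ _
  set M : ℝ := (3/4) * K^2 + C with hMdef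
  have hM : 0 < M := by positivity
  set f : ℝ → ℝ := fun t => t ^ ((3:ℝ)/2) * lam t with hfdef
  set D : ℝ → ℝ := fun t => (3/2 * t ^ ((3:ℝ)/2 - 1)) * lam t
      + t ^ ((3:ℝ)/2) * ((3 / t) * (1 - Real.exp (lam t / 2)) + r t) with hDdef
  have hfderiv : ∀ t ≥ t1, HasDerivAt f (D t) t := by
    intro t ht
    have ht0 : (0:ℝ) < t := lt_of_lt_of_le (by linarith) ht
    exact (Real.hasDerivAt_rpow_const (Or.inl ht0.ne')).mul (hderiv t ht)
  -- bound on D for t ≥ t2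
  have hDbound : ∀ t ≥ t2, |D t| ≤ M * t ^ ((-1:ℝ)/2) := by
    intro t ht
    have ht0 : (0:ℝ) < t := lt_of_lt_of_le ht2pos ht
    have ht1' : t1 ≤ t := le_trans ht12 ht
    have hlam : |lam t| ≤ K * t ^ ((-1:ℝ)/2) := hbound t ht1'
    have hsq : (t ^ ((-1:ℝ)/2))^2 = t⁻¹ := by
      rw [← Real.rpow_natCast (t ^ ((-1:ℝ)/2)) 2, ← Real.rpow_mul ht0.le]
      norm_num [Real.rpow_neg_one]
    have hlamsq : (lam t)^2 ≤ K^2 * t⁻¹ := by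
      have h := sq_le_sq' (neg_le_of_abs_le hlam) (le_of_abs_le hlam)
      calc (lam t)^2 ≤ (K * t ^ ((-1:ℝ)/2))^2 := h
        _ = K^2 * t⁻¹ := by rw [mul_pow, hsq]
    have htinv : t⁻¹ ≤ 1 := by
      rw [inv_le_one_iff₀]; right; linarith
    have hx1 : |lam t / 2| ≤ 1 := by
      have h1 : (lam t)^2 ≤ 1 := by
        calc (lam t)^2 ≤ K^2 * t⁻¹ := hlamsq
          _ ≤ 1 := by
            rw [mul_inv_le_iff₀ ht0, one_mul]; linarith [le_trans hKt2 ht]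
      have h2 : |lam t| ≤ 1 := by
        nlinarith [abs_nonneg (lam t), sq_abs (lam t)]
      rw [abs_div]
      calc |lam t| / |(2:ℝ)| ≤ 1 / 2 := by
            rw [abs_two]; linarith
        _ ≤ 1 := by norm_num
    have htay : |Real.exp (lam t / 2) - 1 - lam t / 2| ≤ (lam t / 2)^2 :=
      Real.abs_exp_sub_one_sub_id_le hx1
    have hA : |lam t / 2 + (1 - Real.exp (lam t / 2))| ≤ (lam t)^2 / 4 := by
      have : lam t / 2 + (1 - Real.exp (lam t / 2))
          = -(Real.exp (lam t / 2) - 1 - lam t / 2) := by ring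
      rw [this, abs_neg]
      calc |Real.exp (lam t / 2) - 1 - lam t / 2| ≤ (lam t / 2)^2 := htay
        _ = (lam t)^2 / 4 := by ring
    have hDeq : D t = t ^ ((3:ℝ)/2)
        * ((3 / t) * (lam t / 2 + (1 - Real.exp (lam t / 2))) + r t) := by
      simp only [hDdef]
      rw [Real.rpow_sub ht0, Real.rpow_one]
      field_simp
      ring
    have hm2 : t ^ ((-2:ℝ)) = t⁻¹ * t⁻¹ := by
      rw [show ((-2):ℝ) = (-1) + (-1) by norm_num, Real.rpow_add ht0, Real.rpow_neg_one]
    have hinner : |(3 / t) * (lam t / 2 + (1 - Real.exp (lam t / 2))) + r t|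
        ≤ M * t ^ ((-2:ℝ)) := by
      have h3t : (0:ℝ) < 3 / t := by positivity
      calc |(3 / t) * (lam t / 2 + (1 - Real.exp (lam t / 2))) + r t|
          ≤ |(3 / t) * (lam t / 2 + (1 - Real.exp (lam t / 2)))| + |r t| := abs_add_le _ _
        _ = (3 / t) * |lam t / 2 + (1 - Real.exp (lam t / 2))| + |r t| := by
            rw [abs_mul, abs_of_pos h3t]
        _ ≤ (3 / t) * ((lam t)^2 / 4) + C * t ^ ((-2:ℝ)) := by
            have := hr t ht1'
            have := mul_le_mul_of_nonneg_left hA h3t.le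
            linarith
        _ ≤ (3 / t) * (K^2 * t⁻¹ / 4) + C * t ^ ((-2:ℝ)) := by
            have h4 : (lam t)^2 / 4 ≤ K^2 * t⁻¹ / 4 := by linarith
            have := mul_le_mul_of_nonneg_left h4 h3t.le
            linarith
        _ = M * t ^ ((-2:ℝ)) := by rw [hMdef, hm2]; ring
    have hpow2 : t ^ ((3:ℝ)/2) * t ^ ((-2:ℝ)) = t ^ ((-1:ℝ)/2) := by
      rw [← Real.rpow_add ht0]; norm_num
    have hrp32 : (0:ℝ) ≤ t ^ ((3:ℝ)/2) := (Real.rpow_pos_of_pos ht0 _).le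
    calc |D t| = t ^ ((3:ℝ)/2)
          * |(3 / t) * (lam t / 2 + (1 - Real.exp (lam t / 2))) + r t| := by
            rw [hDeq, abs_mul, abs_of_nonneg hrp32]
      _ ≤ t ^ ((3:ℝ)/2) * (M * t ^ ((-2:ℝ))) := mul_le_mul_of_nonneg_left hinner hrp32
      _ = M * t ^ ((-1:ℝ)/2) := by rw [← hpow2]; ring
  -- derivative of the comparison function 2M√t
  have hsqrtderiv : ∀ s ≥ t2, HasDerivAt (fun u : ℝ => 2 * M * u ^ ((1:ℝ)/2))
      (M * s ^ ((-1:ℝ)/2)) s := by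
    intro s hs
    have hs0 : (0:ℝ) < s := lt_of_lt_of_le ht2pos hs
    have h0 := (Real.hasDerivAt_rpow_const (x := s) (p := (1:ℝ)/2)
      (Or.inl hs0.ne')).const_mul (2 * M)
    refine h0.congr_deriv ?_
    rw [show (1:ℝ)/2 - 1 = (-1)/2 by norm_num]
    ring
  have hfeq : ∀ s, f s = s ^ ((3:ℝ)/2) * lam s := fun s => rfl
  clear_value t2 M f D
  clear ht2def hMdef hfdef hDdef
  -- monotonicity of  2M√t ± f t  on [t2, ∞)
  have hup : ∀ t ≥ t2, f t ≤ f t2 + 2 * M * t ^ ((1:ℝ)/2)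
      - 2 * M * t2 ^ ((1:ℝ)/2) := by
    have hd : ∀ s ≥ t2, HasDerivAt (fun s => 2 * M * s ^ ((1:ℝ)/2) - f s)
        ((fun s => M * s ^ ((-1:ℝ)/2) - D s) s) s :=
      fun s hs => (hsqrtderiv s hs).sub (hfderiv s (le_trans ht12 hs))
    have hn : ∀ s ≥ t2, 0 ≤ (fun s => M * s ^ ((-1:ℝ)/2) - D s) s := by
      intro s hs
      have h1 := hDbound s hs
      have h2 := le_abs_self (D s)
      show 0 ≤ M * s ^ ((-1:ℝ)/2) - D s
      linarith
    intro t ht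
    have h : 2 * M * t2 ^ ((1:ℝ)/2) - f t2 ≤ 2 * M * t ^ ((1:ℝ)/2) - f t :=
      mono_aux hd hn t ht
    linarith
  have hdown : ∀ t ≥ t2, -(f t) ≤ -(f t2) + 2 * M * t ^ ((1:ℝ)/2)
      - 2 * M * t2 ^ ((1:ℝ)/2) := by
    have hd : ∀ s ≥ t2, HasDerivAt (fun s => 2 * M * s ^ ((1:ℝ)/2) + f s)
        ((fun s => M * s ^ ((-1:ℝ)/2) + D s) s) s :=
      fun s hs => (hsqrtderiv s hs).add (hfderiv s (le_trans ht12 hs))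
    have hn : ∀ s ≥ t2, 0 ≤ (fun s => M * s ^ ((-1:ℝ)/2) + D s) s := by
      intro s hs
      have h1 := hDbound s hs
      have h2 := neg_abs_le (D s)
      show 0 ≤ M * s ^ ((-1:ℝ)/2) + D s
      linarith
    intro t ht
    have h : 2 * M * t2 ^ ((1:ℝ)/2) + f t2 ≤ 2 * M * t ^ ((1:ℝ)/2) + f t :=
      mono_aux hd hn t ht
    linarith
  have habsf : ∀ t ≥ t2, |f t| ≤ |f t2| + 2 * M * t ^ ((1:ℝ)/2) := by
    intro t ht
    have h2 : (0:ℝ) ≤ 2 * M * t2 ^ ((1:ℝ)/2) := by positivity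
    rw [abs_le]
    constructor
    · linarith [hdown t ht, neg_abs_le (f t2)]
    · linarith [hup t ht, le_abs_self (f t2)]
  refine ⟨K * t2 + (|f t2| + 2 * M) + 1, by positivity, ?_⟩
  intro t ht
  have ht0 : (0:ℝ) < t := lt_of_lt_of_le (by linarith) ht
  have htinv : (0:ℝ) < t⁻¹ := by positivity
  rcases le_or_gt t2 t with h | h
  · -- large t : use the integrated bound
    have hf32 : (0:ℝ) < t ^ ((3:ℝ)/2) := Real.rpow_pos_of_pos ht0 _
    have hft : t ^ ((3:ℝ)/2) * |lam t| ≤ |f t2| + 2 * M * t ^ ((1:ℝ)/2) := by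
      have h2 := habsf t h
      rw [hfeq t, abs_mul, abs_of_nonneg hf32.le] at h2
      exact h2
    have hone : (1:ℝ) ≤ t ^ ((1:ℝ)/2) := by
      have := Real.rpow_le_rpow (by norm_num : (0:ℝ) ≤ 1)
        (by linarith : (1:ℝ) ≤ t) (by norm_num : (0:ℝ) ≤ 1/2)
      simpa using this
    have hkey : t ^ ((3:ℝ)/2) * t⁻¹ = t ^ ((1:ℝ)/2) := by
      rw [← Real.rpow_neg_one t, ← Real.rpow_add ht0]; norm_num
    have : |lam t| ≤ (|f t2| + 2 * M) * t⁻¹ := by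
      rw [← mul_le_mul_iff_right₀ hf32, show t ^ ((3:ℝ)/2) * ((|f t2| + 2 * M) * t⁻¹)
        = (|f t2| + 2 * M) * (t ^ ((3:ℝ)/2) * t⁻¹) by ring, hkey]
      calc t ^ ((3:ℝ)/2) * |lam t| ≤ |f t2| + 2 * M * t ^ ((1:ℝ)/2) := hft
        _ ≤ |f t2| * t ^ ((1:ℝ)/2) + 2 * M * t ^ ((1:ℝ)/2) := by
            nlinarith [abs_nonneg (f t2)]
        _ = (|f t2| + 2 * M) * t ^ ((1:ℝ)/2) := by ring
    have hmul : (|f t2| + 2 * M) * t⁻¹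
        ≤ (K * t2 + (|f t2| + 2 * M) + 1) * t⁻¹ := by
      apply mul_le_mul_of_nonneg_right _ htinv.le
      nlinarith [abs_nonneg (f t2)]
    linarith
  · -- small t : use the assumed bound directly
    have hlam : |lam t| ≤ K * t ^ ((-1:ℝ)/2) := hbound t ht
    have hsplit : t ^ ((-1:ℝ)/2) = t ^ ((1:ℝ)/2) * t⁻¹ := by
      rw [← Real.rpow_neg_one t, ← Real.rpow_add ht0]; norm_num
    have hle : t ^ ((1:ℝ)/2) ≤ t2 := by
      calc t ^ ((1:ℝ)/2) ≤ t2 ^ ((1:ℝ)/2) :=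
            Real.rpow_le_rpow ht0.le h.le (by norm_num)
        _ ≤ t2 ^ (1:ℝ) := Real.rpow_le_rpow_of_exponent_le ht2one (by norm_num)
        _ = t2 := Real.rpow_one t2
    have : |lam t| ≤ K * t2 * t⁻¹ := by
      rw [hsplit] at hlam
      calc |lam t| ≤ K * (t ^ ((1:ℝ)/2) * t⁻¹) := by linarith [hlam]
        _ ≤ K * (t2 * t⁻¹) := by
            apply mul_le_mul_of_nonneg_left _ hK.le
            exact mul_le_mul_of_nonneg_right hle htinv.le
        _ = K * t2 * t⁻¹ := by ring
    have hmul : K * t2 * t⁻¹ ≤ (K * t2 + (|f t2| + 2 * M) + 1) * t⁻¹ := by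
      apply mul_le_mul_of_nonneg_right _ htinv.le
      nlinarith [abs_nonneg (f t2)]
    linarith
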